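/- Let a > 0, t0 = (a+1)/a, T0 = (a+1)^2/a. The function x0 : ℝ → ℝ defined as the T0-periodic extension of x0(t) = t for t ∈ [0,1], x0(t) = −a(t − t0) for t ∈ [1, t0+1], x0(t) = t − T0 for t ∈ [t0+1, T0] is continuous, satisfies x0(t + T0) = x0(t) for all t ∈ ℝ, and for every t ∈ ℝ not of the form 1 + kT0 or t0 + 1 + kT0 with k ∈ ℤ, x0 is differentiable at t with x0′(t) = R(x0(t−1)). -/

import Mathlib

/-- The relay nonlinearity: `R a x = 1` if `x ≤ 0`, and `R a x = -a` if `x > 0`. -/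
noncomputable def R (a x : ℝ) : ℝ := if x ≤ 0 then 1 else -a

/-- for `a > 0`, `t0 = (a+1)/a`, `T0 = (a+1)^2/a`, the `T0`-periodic
extension `x0` of the piecewise function `t` on `[0,1]`, `-a(t-t0)` on `[1,t0+1]`,
`t - T0` on `[t0+1,T0]` is continuous, `T0`-periodic, and away from the points
`1 + k T0`, `t0 + 1 + k T0` (`k ∈ ℤ`) it is differentiable with
`x0'(t) = R (x0 (t-1))`. -/
theorem stmt_0 (a : ℝ) (ha : 0 < a) (t0 T0 : ℝ)
    (ht0 : t0 = (a + 1) / a) (hT0 : T0 = (a + 1) ^ 2 / a)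
    (x0 : ℝ → ℝ)
    (hx0per : ∀ t : ℝ, x0 (t + T0) = x0 t)
    (hx0a : ∀ t ∈ Set.Icc (0 : ℝ) 1, x0 t = t)
    (hx0b : ∀ t ∈ Set.Icc (1 : ℝ) (t0 + 1), x0 t = -a * (t - t0))
    (hx0c : ∀ t ∈ Set.Icc (t0 + 1) T0, x0 t = t - T0) :
    Continuous x0 ∧
    (∀ t : ℝ, x0 (t + T0) = x0 t) ∧
    (∀ t : ℝ, (∀ k : ℤ, t ≠ 1 + (k : ℝ) * T0 ∧ t ≠ t0 + 1 + (k : ℝ) * T0) →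
      HasDerivAt x0 (R a (x0 (t - 1))) t) := by
  have hgt1 : 1 < t0 := by
    rw [ht0, lt_div_iff₀ ha]; linarith
  have hTt : T0 = t0 + 1 + a := by
    rw [ht0, hT0]; field_simp; ring
  have hT0pos : 0 < T0 := by rw [hTt]; linarith
  -- periodicity for all integer multiples
  have hper : ∀ (k : ℤ) (t : ℝ), x0 (t + k * T0) = x0 t := by
    intro k
    induction k using Int.induction_on with
    | zero => intro t; simp
    | succ n ih =>
        intro t
        have h1 : t + (((n : ℤ) + 1 : ℤ) : ℝ) * T0 = (t + (n : ℝ) * T0) + T0 := by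
          push_cast; ring
        rw [h1, hx0per]
        have := ih t; push_cast at this ⊢; linarith [this]
    | pred n ih =>
        intro t
        have h1 := hx0per (t + ((-(n : ℤ) - 1 : ℤ) : ℝ) * T0)
        have h2 : t + ((-(n : ℤ) - 1 : ℤ) : ℝ) * T0 + T0 = t + ((-(n : ℤ) : ℤ) : ℝ) * T0 := by
          push_cast; ring
        rw [h2, ih] at h1
        exact h1.symm
  -- x0 = id on [-a, 1]
  have hA : ∀ t ∈ Set.Icc (-a) 1, x0 t = t := by
    intro t ht
    by_cases h : 0 ≤ t
    · exact hx0a t ⟨h, ht.2⟩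
    · have h1 := hx0c (t + T0) ⟨by have := ht.1; rw [hTt]; linarith, by linarith⟩
      have h2 := hx0per t
      rw [h1] at h2
      linarith [h2]
  -- x0 = · - T0 on [t0+1, T0+1]
  have hC : ∀ t ∈ Set.Icc (t0 + 1) (T0 + 1), x0 t = t - T0 := by
    intro t ht
    by_cases h : t ≤ T0
    · exact hx0c t ⟨ht.1, h⟩
    · have h1 := hx0a (t - T0) ⟨by linarith, by linarith [ht.2]⟩
      have h2 := hx0per (t - T0)
      have h3 : t - T0 + T0 = t := by ring
      rw [h3, h1] at h2
      exact h2
  -- locally affine ⇒ derivative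
  have key : ∀ (p q s c d : ℝ), p < s → s < q → (∀ u ∈ Set.Ioo p q, x0 u = c * u + d) →
      HasDerivAt x0 c s := by
    intro p q s c d hp hq h
    have hf : HasDerivAt (fun u : ℝ => c * u + d) c s := by
      simpa using ((hasDerivAt_id s).const_mul c).add_const d
    apply hf.congr_of_eventuallyEq
    filter_upwards [Ioo_mem_nhds hp hq] with u hu
    exact h u hu
  have hfun : ∀ k : ℤ, x0 = fun u => x0 (u - (k : ℝ) * T0) := by
    intro k; funext u
    have h1 := hper k (u - (k : ℝ) * T0)
    have h2 : u - (k : ℝ) * T0 + (k : ℝ) * T0 = u := by ring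
    rw [h2] at h1
    exact h1
  have hshiftD : ∀ (k : ℤ) (c t : ℝ), HasDerivAt x0 c (t - (k : ℝ) * T0) → HasDerivAt x0 c t := by
    intro k c t h
    have hg : HasDerivAt (fun u : ℝ => u - (k : ℝ) * T0) 1 t := (hasDerivAt_id t).sub_const _
    have hcomp := HasDerivAt.comp t h hg
    rw [mul_one] at hcomp
    rw [hfun k]
    exact hcomp
  have hshiftC : ∀ (k : ℤ) (t : ℝ), ContinuousAt x0 (t - (k : ℝ) * T0) → ContinuousAt x0 t := by
    intro k t h
    have hg : ContinuousAt (fun u : ℝ => u - (k : ℝ) * T0) t :=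
      (continuous_id.sub continuous_const).continuousAt
    have hcomp : ContinuousAt (x0 ∘ fun u : ℝ => u - (k : ℝ) * T0) t :=
      ContinuousAt.comp h hg
    rw [hfun k]
    exact hcomp
  -- main derivative statement
  have hderiv : ∀ t : ℝ, (∀ k : ℤ, t ≠ 1 + (k : ℝ) * T0 ∧ t ≠ t0 + 1 + (k : ℝ) * T0) →
      HasDerivAt x0 (R a (x0 (t - 1))) t := by
    intro t hk
    set k : ℤ := ⌊(t - 1) / T0⌋ with hkdef
    have hb1 : (k : ℝ) * T0 ≤ t - 1 := by
      have h := Int.floor_le ((t - 1) / T0)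
      rw [le_div_iff₀ hT0pos] at h
      exact h
    have hb2 : t - 1 < (k : ℝ) * T0 + T0 := by
      have h := Int.lt_floor_add_one ((t - 1) / T0)
      rw [div_lt_iff₀ hT0pos] at h
      nlinarith [h]
    set s : ℝ := t - (k : ℝ) * T0 with hsdef
    have hs1 : 1 ≤ s := by rw [hsdef]; linarith
    have hs2 : s < 1 + T0 := by rw [hsdef]; linarith
    have hne1 : s ≠ 1 := by
      intro h
      exact (hk k).1 (by rw [hsdef] at h; linarith)
    have hne2 : s ≠ t0 + 1 := by
      intro h
      exact (hk k).2 (by rw [hsdef] at h; linarith)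
    have hxeq : x0 (t - 1) = x0 (s - 1) := by
      have h1 := hper k (s - 1)
      rw [show s - 1 + (k : ℝ) * T0 = t - 1 by rw [hsdef]; ring] at h1
      exact h1
    have hs1' : 1 < s := lt_of_le_of_ne hs1 (Ne.symm hne1)
    by_cases hcase : s < t0 + 1
    · -- on (1, t0+1): derivative -a, x0 (s-1) > 0
      have hd : HasDerivAt x0 (-a) s := by
        apply key 1 (t0 + 1) s (-a) (a * t0) hs1' hcase
        intro u hu
        rw [hx0b u ⟨le_of_lt hu.1, le_of_lt hu.2⟩]; ring
      have hpos : 0 < x0 (s - 1) := by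
        by_cases h2 : s - 1 ≤ 1
        · rw [hA (s - 1) ⟨by linarith, h2⟩]; linarith
        · rw [hx0b (s - 1) ⟨by linarith, by linarith⟩]
          nlinarith
      have hR : R a (x0 (t - 1)) = -a := by
        rw [hxeq]; unfold R; rw [if_neg (not_le.2 hpos)]
      rw [hR]
      exact hshiftD k (-a) t hd
    · -- on (t0+1, 1+T0): derivative 1, x0 (s-1) ≤ 0
      have hs3 : t0 + 1 < s := lt_of_le_of_ne (not_lt.1 hcase) (Ne.symm hne2)
      have hd : HasDerivAt x0 1 s := by
        apply key (t0 + 1) (T0 + 1) s 1 (-T0) hs3 (by linarith)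
        intro u hu
        rw [hC u ⟨le_of_lt hu.1, le_of_lt hu.2⟩]; ring
      have hnp : x0 (s - 1) ≤ 0 := by
        by_cases h2 : s - 1 ≤ t0 + 1
        · rw [hx0b (s - 1) ⟨by linarith, h2⟩]
          nlinarith
        · rw [hx0c (s - 1) ⟨by linarith, by linarith⟩]
          linarith
      have hR : R a (x0 (t - 1)) = 1 := by
        rw [hxeq]; unfold R; rw [if_pos hnp]
      rw [hR]
      exact hshiftD k 1 t hd
  -- continuity
  have hcont : Continuous x0 := by
    rw [continuous_iff_continuousAt]
    intro t
    set k : ℤ := ⌊t / T0⌋ with hkdef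
    have hb1 : (k : ℝ) * T0 ≤ t := by
      have h := Int.floor_le (t / T0)
      rw [le_div_iff₀ hT0pos] at h
      exact h
    have hb2 : t < (k : ℝ) * T0 + T0 := by
      have h := Int.lt_floor_add_one (t / T0)
      rw [div_lt_iff₀ hT0pos] at h
      nlinarith [h]
    set s : ℝ := t - (k : ℝ) * T0 with hsdef
    have hs0 : 0 ≤ s := by rw [hsdef]; linarith
    have hsT : s < T0 := by rw [hsdef]; linarith
    apply hshiftC k t
    rw [← hsdef]
    rcases lt_trichotomy s 1 with h1 | h1 | h1
    · exact (key (-a) 1 s 1 0 (by linarith) h1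
        (fun u hu => by rw [hA u ⟨le_of_lt hu.1, le_of_lt hu.2⟩]; ring)).continuousAt
    · have cl : ContinuousWithinAt x0 (Set.Icc (-a) 1) 1 := by
        apply ContinuousWithinAt.congr (f := fun u : ℝ => u)
        · exact continuous_id.continuousWithinAt
        · intro u hu; exact hA u hu
        · exact hA 1 ⟨by linarith, le_refl 1⟩
      have cr : ContinuousWithinAt x0 (Set.Icc (1 : ℝ) (t0 + 1)) 1 := by
        apply ContinuousWithinAt.congr (f := fun u : ℝ => -a * (u - t0))
        · exact (continuous_const.mul (continuous_id.sub continuous_const)).continuousWithinAt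
        · intro u hu; exact hx0b u hu
        · exact hx0b 1 ⟨le_refl 1, by linarith⟩
      have hu := cl.union cr
      rw [Set.Icc_union_Icc_eq_Icc (by linarith : -a ≤ (1:ℝ)) (by linarith : (1:ℝ) ≤ t0 + 1)] at hu
      rw [h1]
      exact hu.continuousAt (Icc_mem_nhds (by linarith) (by linarith))
    · rcases lt_trichotomy s (t0 + 1) with h2 | h2 | h2
      · exact (key 1 (t0 + 1) s (-a) (a * t0) h1 h2
          (fun u hu => by rw [hx0b u ⟨le_of_lt hu.1, le_of_lt hu.2⟩]; ring)).continuousAt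
      · have cl : ContinuousWithinAt x0 (Set.Icc (1 : ℝ) (t0 + 1)) (t0 + 1) := by
          apply ContinuousWithinAt.congr (f := fun u : ℝ => -a * (u - t0))
          · exact (continuous_const.mul (continuous_id.sub continuous_const)).continuousWithinAt
          · intro u hu; exact hx0b u hu
          · exact hx0b (t0 + 1) ⟨by linarith, le_refl _⟩
        have cr : ContinuousWithinAt x0 (Set.Icc (t0 + 1) (T0 + 1)) (t0 + 1) := by
          apply ContinuousWithinAt.congr (f := fun u : ℝ => u - T0)
          · exact (continuous_id.sub continuous_const).continuousWithinAt
          · intro u hu; exact hC u hu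
          · exact hC (t0 + 1) ⟨le_refl _, by rw [hTt]; linarith⟩
        have hu := cl.union cr
        rw [Set.Icc_union_Icc_eq_Icc (by linarith : (1:ℝ) ≤ t0 + 1)
          (by rw [hTt]; linarith : t0 + 1 ≤ T0 + 1)] at hu
        rw [h2]
        exact hu.continuousAt (Icc_mem_nhds (by linarith) (by rw [hTt]; linarith))
      · exact (key (t0 + 1) (T0 + 1) s 1 (-T0) h2 (by linarith)
          (fun u hu => by rw [hC u ⟨le_of_lt hu.1, le_of_lt hu.2⟩]; ring)).continuousAt
  exact ⟨hcont, hx0per, hderiv⟩
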